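/- (Scrambled cost function lower bound.) Let N ≥ 2 and let h : {0, 1, ..., N-1} → ℝ satisfy h(0) = 0 and h(z) > 0 for all z ≠ 0; set h* = (Σ_z h(z)² / (N-1))^{1/2}. Let H_D : ℝ → (N × N Hermitian matrices over ℂ) be continuous, let c : ℝ → ℝ satisfy |c(t)| ≤ 1 for all t, let ψ₀ ∈ ℂ^N be a unit vector, and let T > 0. For each permutation π of {0, ..., N-1} let D_π be the diagonal matrix with (z,z) entry h(π⁻¹(z)), and let ψ_π : [0,T] → ℂ^N satisfy i·ψ_π'(t) = (H_D(t) + c(t)·D_π)·ψ_π(t) with ψ_π(0) = ψ₀. Let 0 < ε ≤ 1 with N ≥ 256/ε. If |⟨e_{π(0)}, ψ_π(T)⟩|² ≥ 1/2 for at least ε·N! permutations π, then T ≥ ε²·√N / (64·h*). -/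

import Mathlib

open scoped Classical

section auxStmt19

variable {N : ℕ}

private lemma stmt19.coord_norm_le (x : EuclideanSpace ℂ (Fin N)) (z : Fin N) :
    ‖x z‖ ≤ ‖x‖ := by
  rw [EuclideanSpace.norm_eq]
  have h1 : ‖x z‖ ^ 2 ≤ ∑ i, ‖x i‖ ^ 2 :=
    Finset.single_le_sum (f := fun i => ‖x i‖ ^ 2) (fun i _ => sq_nonneg _) (Finset.mem_univ z)
  calc ‖x z‖ = Real.sqrt (‖x z‖ ^ 2) := (Real.sqrt_sq (norm_nonneg _)).symm
    _ ≤ _ := Real.sqrt_le_sqrt h1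

private lemma stmt19.coords_norm_sq (x : EuclideanSpace ℂ (Fin N)) :
    ∑ i, ‖x i‖ ^ 2 = ‖x‖ ^ 2 := by
  rw [EuclideanSpace.norm_eq, Real.sq_sqrt]
  positivity

private lemma stmt19.herm_symm {A : Matrix (Fin N) (Fin N) ℂ} (hA : A.IsHermitian)
    (u v : EuclideanSpace ℂ (Fin N)) :
    (inner ℂ (Matrix.toEuclideanCLM (𝕜 := ℂ) A u) v : ℂ)
      = inner ℂ u (Matrix.toEuclideanCLM (𝕜 := ℂ) A v) :=
  (Matrix.isHermitian_iff_isSymmetric.1 hA) u v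

private lemma stmt19.diag_clm_apply (g : Fin N → ℂ) (v : EuclideanSpace ℂ (Fin N)) (z : Fin N) :
    (Matrix.toEuclideanCLM (𝕜 := ℂ) (Matrix.diagonal g) v) z = g z * v z := by
  have h1 : (Matrix.toEuclideanCLM (𝕜 := ℂ) (Matrix.diagonal g) v) z
      = (WithLp.equiv 2 _ ((Matrix.toEuclideanCLM (𝕜 := ℂ) (Matrix.diagonal g)) v)) z := rfl
  rw [Matrix.ofLp_toEuclideanCLM]
  simp [Matrix.toLin'_apply, Matrix.mulVec_diagonal]

private lemma stmt19.ham_herm (HDt : Matrix (Fin N) (Fin N) ℂ) (hH : HDt.IsHermitian)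
    (ct : ℝ) (d : Fin N → ℝ) :
    (HDt + (ct : ℂ) • Matrix.diagonal (fun z => (d z : ℂ))).IsHermitian := by
  refine hH.add ?_
  unfold Matrix.IsHermitian
  rw [Matrix.conjTranspose_smul, Matrix.diagonal_conjTranspose]
  have e1 : star ((ct : ℂ)) = (ct : ℂ) := by simp [RCLike.star_def, Complex.conj_ofReal]
  have e2 : (star (fun z => ((d z : ℂ)))) = fun z => ((d z : ℂ)) := by
    funext z; simp [Pi.star_apply, RCLike.star_def, Complex.conj_ofReal]
  rw [e1, e2]

private lemma stmt19.herm_inner_zero {A : Matrix (Fin N) (Fin N) ℂ} (hA : A.IsHermitian)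
    (u : EuclideanSpace ℂ (Fin N)) :
    (inner ℂ u (-Complex.I • (Matrix.toEuclideanCLM (𝕜 := ℂ) A u)) : ℂ)
      + inner ℂ (-Complex.I • (Matrix.toEuclideanCLM (𝕜 := ℂ) A u)) u = 0 := by
  rw [inner_smul_right, inner_smul_left, stmt19.herm_symm hA]
  simp [Complex.conj_I]

private lemma stmt19.unit_evolution {T : ℝ} (f : ℝ → EuclideanSpace ℂ (Fin N))
    (A : ℝ → Matrix (Fin N) (Fin N) ℂ) (hA : ∀ t, (A t).IsHermitian)
    (hder : ∀ t ∈ Set.Icc (0:ℝ) T,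
      HasDerivAt f (-Complex.I • (Matrix.toEuclideanCLM (𝕜 := ℂ) (A t) (f t))) t) :
    ∀ t ∈ Set.Icc (0:ℝ) T, ‖f t‖ = ‖f 0‖ := by
  have hd0 : ∀ t ∈ Set.Icc (0:ℝ) T,
      HasDerivWithinAt (fun s => (inner ℂ (f s) (f s) : ℂ)) ((fun _ => (0:ℂ)) t)
        (Set.Icc 0 T) t := by
    intro t ht
    have hg := ((hder t ht).inner (𝕜 := ℂ) (hder t ht)).hasDerivWithinAt (s := Set.Icc (0:ℝ) T)
    rw [stmt19.herm_inner_zero (hA t) (f t)] at hg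
    exact hg
  have hMVT := norm_image_sub_le_of_norm_deriv_le_segment' (C := 0) hd0 (fun x _ => by simp)
  intro t ht
  have h3 : (inner ℂ (f t) (f t) : ℂ) = inner ℂ (f 0) (f 0) := by
    have := hMVT t ht
    rw [zero_mul] at this
    exact sub_eq_zero.1 (norm_le_zero_iff.1 this)
  have h4 : (‖f t‖:ℝ)^2 = ‖f 0‖^2 := by
    have e1 := inner_self_eq_norm_sq (𝕜 := ℂ) (f t)
    have e2 := inner_self_eq_norm_sq (𝕜 := ℂ) (f 0)
    rw [← e1, ← e2, h3]
  calc ‖f t‖ = Real.sqrt (‖f t‖^2) := (Real.sqrt_sq (norm_nonneg _)).symm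
    _ = Real.sqrt (‖f 0‖^2) := by rw [h4]
    _ = ‖f 0‖ := Real.sqrt_sq (norm_nonneg _)

private lemma stmt19.pair_bound (h : Fin N → ℝ) (z₀ w : Fin N) (hz0 : h z₀ = 0)
    (hw0 : 0 ≤ h w) (hzw : w ≠ z₀)
    (HDt : Matrix (Fin N) (Fin N) ℂ) (hH : HDt.IsHermitian) (ct : ℝ) (hct : |ct| ≤ 1)
    (π : Equiv.Perm (Fin N)) (u v : EuclideanSpace ℂ (Fin N)) (hu : ‖u‖ = 1) (hv : ‖v‖ = 1) :
    ‖(inner ℂ u (-Complex.I • (Matrix.toEuclideanCLM (𝕜 := ℂ)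
        (HDt + (ct : ℂ) • Matrix.diagonal
          (fun z => (h ((π * Equiv.swap z₀ w).symm z) : ℂ))) v)) : ℂ)
      + inner ℂ (-Complex.I • (Matrix.toEuclideanCLM (𝕜 := ℂ)
        (HDt + (ct : ℂ) • Matrix.diagonal (fun z => (h (π.symm z) : ℂ))) u)) v‖
      ≤ h w * ‖v (π z₀)‖ + h w * ‖u (π w)‖ := by
  set σ : Equiv.Perm (Fin N) := π * Equiv.swap z₀ w with hσdef
  set gd : Fin N → ℂ := fun z => (ct : ℂ) * ((h (π.symm z) : ℂ) - (h (σ.symm z) : ℂ)) with hgd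
  set Aπ : Matrix (Fin N) (Fin N) ℂ :=
    HDt + (ct : ℂ) • Matrix.diagonal (fun z => (h (π.symm z) : ℂ)) with hAπ
  set Aσ : Matrix (Fin N) (Fin N) ℂ :=
    HDt + (ct : ℂ) • Matrix.diagonal (fun z => (h (σ.symm z) : ℂ)) with hAσ
  have hσsymm : ∀ z, σ.symm z = Equiv.swap z₀ w (π.symm z) := by
    intro z
    rw [hσdef]
    simp [Equiv.Perm.mul_def, Equiv.symm_trans_apply]
  have e1 : (inner ℂ u (-Complex.I • (Matrix.toEuclideanCLM (𝕜 := ℂ) Aσ v)) : ℂ)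
      + inner ℂ (-Complex.I • (Matrix.toEuclideanCLM (𝕜 := ℂ) Aπ u)) v
      = Complex.I * ((inner ℂ u (Matrix.toEuclideanCLM (𝕜 := ℂ) Aπ v) : ℂ)
          - inner ℂ u (Matrix.toEuclideanCLM (𝕜 := ℂ) Aσ v)) := by
    rw [inner_smul_right, inner_smul_left,
      stmt19.herm_symm (show Aπ.IsHermitian by rw [hAπ]; exact stmt19.ham_herm HDt hH ct _)]
    simp [Complex.conj_I]
    ring
  have emat : Aπ - Aσ = Matrix.diagonal gd := by
    rw [hAπ, hAσ]
    ext i j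
    by_cases hij : i = j
    · subst hij
      simp [Matrix.add_apply, Matrix.smul_apply, Matrix.diagonal_apply_eq, hgd]
      ring
    · simp [Matrix.add_apply, Matrix.smul_apply, Matrix.diagonal_apply_ne _ hij, hgd]
  have e2 : (inner ℂ u (Matrix.toEuclideanCLM (𝕜 := ℂ) Aπ v) : ℂ)
      - inner ℂ u (Matrix.toEuclideanCLM (𝕜 := ℂ) Aσ v)
      = inner ℂ u (Matrix.toEuclideanCLM (𝕜 := ℂ) (Matrix.diagonal gd) v) := by
    rw [← inner_sub_right]
    congr 1
    rw [← emat, map_sub]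
    simp [ContinuousLinearMap.sub_apply]
  have e3 : (inner ℂ u (Matrix.toEuclideanCLM (𝕜 := ℂ) (Matrix.diagonal gd) v) : ℂ)
      = ∑ z, (starRingEnd ℂ) (u z) * (gd z * v z) := by
    simp [PiLp.inner_apply, RCLike.inner_apply, stmt19.diag_clm_apply]
    exact Finset.sum_congr rfl fun _ _ => by ring
  have hne : π z₀ ≠ π w := by
    intro hcontra
    exact hzw (π.injective hcontra).symm
  have hgd0 : ∀ z, z ∉ ({π z₀, π w} : Finset (Fin N)) →
      (starRingEnd ℂ) (u z) * (gd z * v z) = 0 := by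
    intro z hz
    simp only [Finset.mem_insert, Finset.mem_singleton, not_or] at hz
    have h1 : π.symm z ≠ z₀ := fun hh => hz.1 (by rw [← hh, Equiv.apply_symm_apply])
    have h2 : π.symm z ≠ w := fun hh => hz.2 (by rw [← hh, Equiv.apply_symm_apply])
    have h3 : σ.symm z = π.symm z := by
      rw [hσsymm z]
      exact Equiv.swap_apply_of_ne_of_ne h1 h2
    rw [hgd]
    simp [h3]
  have e4 : ∑ z, (starRingEnd ℂ) (u z) * (gd z * v z)
      = (starRingEnd ℂ) (u (π z₀)) * (gd (π z₀) * v (π z₀))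
        + (starRingEnd ℂ) (u (π w)) * (gd (π w) * v (π w)) := by
    rw [← Finset.sum_subset (Finset.subset_univ ({π z₀, π w} : Finset (Fin N)))
      (fun z _ hz => hgd0 z hz)]
    rw [Finset.sum_insert (by simp [hne]), Finset.sum_singleton]
  have hv1 : σ.symm (π z₀) = w := by
    rw [hσsymm, Equiv.symm_apply_apply, Equiv.swap_apply_left]
  have hv2 : σ.symm (π w) = z₀ := by
    rw [hσsymm, Equiv.symm_apply_apply, Equiv.swap_apply_right]
  have hgd1 : gd (π z₀) = (ct : ℂ) * (0 - (h w : ℂ)) := by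
    rw [hgd]; simp [Equiv.symm_apply_apply, hv1, hz0]
  have hgd2 : gd (π w) = (ct : ℂ) * ((h w : ℂ) - 0) := by
    rw [hgd]; simp [Equiv.symm_apply_apply, hv2, hz0]
  have hcu : ∀ z, ‖u z‖ ≤ 1 := fun z => hu ▸ stmt19.coord_norm_le u z
  have hcv : ∀ z, ‖v z‖ ≤ 1 := fun z => hv ▸ stmt19.coord_norm_le v z
  calc ‖(inner ℂ u (-Complex.I • (Matrix.toEuclideanCLM (𝕜 := ℂ) Aσ v)) : ℂ)
      + inner ℂ (-Complex.I • (Matrix.toEuclideanCLM (𝕜 := ℂ) Aπ u)) v‖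
      = ‖(starRingEnd ℂ) (u (π z₀)) * (gd (π z₀) * v (π z₀))
        + (starRingEnd ℂ) (u (π w)) * (gd (π w) * v (π w))‖ := by
        rw [e1, e2, e3, e4, norm_mul, Complex.norm_I, one_mul]
    _ ≤ ‖(starRingEnd ℂ) (u (π z₀)) * (gd (π z₀) * v (π z₀))‖
        + ‖(starRingEnd ℂ) (u (π w)) * (gd (π w) * v (π w))‖ := norm_add_le _ _
    _ ≤ h w * ‖v (π z₀)‖ + h w * ‖u (π w)‖ := by
        have b1 : ‖(starRingEnd ℂ) (u (π z₀)) * (gd (π z₀) * v (π z₀))‖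
            ≤ h w * ‖v (π z₀)‖ := by
          rw [norm_mul, norm_mul, hgd1, RCLike.norm_conj]
          have : ‖(ct : ℂ) * (0 - (h w : ℂ))‖ = |ct| * h w := by
            rw [norm_mul, Complex.norm_real, zero_sub, norm_neg, Complex.norm_real,
              Real.norm_eq_abs, Real.norm_eq_abs, abs_of_nonneg hw0]
          rw [this]
          have hx1 : ‖u (π z₀)‖ ≤ 1 := hcu _
          calc ‖u (π z₀)‖ * (|ct| * h w * ‖v (π z₀)‖)
              ≤ 1 * (1 * h w * ‖v (π z₀)‖) := by gcongr
            _ = h w * ‖v (π z₀)‖ := by ring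
        have b2 : ‖(starRingEnd ℂ) (u (π w)) * (gd (π w) * v (π w))‖
            ≤ h w * ‖u (π w)‖ := by
          rw [norm_mul, norm_mul, hgd2, RCLike.norm_conj]
          have : ‖(ct : ℂ) * ((h w : ℂ) - 0)‖ = |ct| * h w := by
            rw [norm_mul, Complex.norm_real, sub_zero, Complex.norm_real,
              Real.norm_eq_abs, Real.norm_eq_abs, abs_of_nonneg hw0]
          rw [this]
          have hx2 : ‖v (π w)‖ ≤ 1 := hcv _
          calc ‖u (π w)‖ * (|ct| * h w * ‖v (π w)‖)
              ≤ ‖u (π w)‖ * (1 * h w * 1) := by gcongr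
            _ = h w * ‖u (π w)‖ := by ring
        linarith

end auxStmt19

set_option maxHeartbeats 4000000 in
/-- Scrambled cost-function lower bound: no continuous-time Hamiltonian evolution with a
π-independent driver can find the minimum of a scrambled cost function for an `ε`
fraction of all permutations in time less than `ε²√N/(64 h*)`. -/
theorem stmt19 (N : ℕ) (hN2 : 2 ≤ N)
    (h : Fin N → ℝ) (h0 : h ⟨0, by omega⟩ = 0)
    (hpos : ∀ z : Fin N, z ≠ ⟨0, by omega⟩ → 0 < h z)
    (HD : ℝ → Matrix (Fin N) (Fin N) ℂ)
    (hHDcont : ∀ z z', Continuous fun t => HD t z z')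
    (hHDherm : ∀ t, (HD t).IsHermitian)
    (c : ℝ → ℝ) (hc : ∀ t, |c t| ≤ 1)
    (ψ₀ : EuclideanSpace ℂ (Fin N)) (hψ₀ : ‖ψ₀‖ = 1)
    (T : ℝ) (hT : 0 < T)
    (ψ : Equiv.Perm (Fin N) → ℝ → EuclideanSpace ℂ (Fin N))
    (hstart : ∀ π, ψ π 0 = ψ₀)
    (hSch : ∀ π : Equiv.Perm (Fin N), ∀ t ∈ Set.Icc (0 : ℝ) T,
      HasDerivAt (ψ π)
        (-Complex.I • (Matrix.toEuclideanCLM (𝕜 := ℂ)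
          (HD t + (c t : ℂ) • Matrix.diagonal fun z => (h (π.symm z) : ℂ)) (ψ π t))) t)
    (ε : ℝ) (hε0 : 0 < ε) (hε1 : ε ≤ 1) (hNε : 256 / ε ≤ (N : ℝ))
    (hsuccess : ε * (Nat.factorial N) ≤
      ((Finset.univ.filter fun π : Equiv.Perm (Fin N) =>
        (1 / 2 : ℝ) ≤ ‖(inner ℂ (EuclideanSpace.single (π ⟨0, by omega⟩) (1 : ℂ)) (ψ π T) : ℂ)‖ ^ 2).card : ℝ)) :
    ε ^ 2 * Real.sqrt N / (64 * Real.sqrt ((∑ z, h z ^ 2) / ((N : ℝ) - 1))) ≤ T := by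
  classical
  have hN0 : 0 < N := by omega
  set z₀ : Fin N := ⟨0, by omega⟩ with hz₀def
  set Pr : Finset (Fin N) := Finset.univ.erase z₀ with hPrdef
  have key_unit : ∀ (π : Equiv.Perm (Fin N)), ∀ t ∈ Set.Icc (0:ℝ) T, ‖ψ π t‖ = 1 := by
    intro π t ht
    have hh := stmt19.unit_evolution (ψ π)
      (fun s => HD s + (c s : ℂ) • Matrix.diagonal fun z => (h (π.symm z) : ℂ))
      (fun s => stmt19.ham_herm (HD s) (hHDherm s) (c s) _) (fun s hs => hSch π s hs) t ht
    rw [hh, hstart, hψ₀]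
  have hTmem : T ∈ Set.Icc (0:ℝ) T := Set.right_mem_Icc.2 hT.le
  set fIP : Equiv.Perm (Fin N) → Fin N → ℝ → ℂ :=
    fun π w t => inner ℂ (ψ π t) (ψ (π * Equiv.swap z₀ w) t) with hfIP
  set fD : Equiv.Perm (Fin N) → Fin N → ℝ → ℂ := fun π w t =>
    (inner ℂ (ψ π t) (-Complex.I • (Matrix.toEuclideanCLM (𝕜 := ℂ)
        (HD t + (c t : ℂ) • Matrix.diagonal
          (fun z => (h ((π * Equiv.swap z₀ w).symm z) : ℂ))) (ψ (π * Equiv.swap z₀ w) t))) : ℂ)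
      + inner ℂ (-Complex.I • (Matrix.toEuclideanCLM (𝕜 := ℂ)
        (HD t + (c t : ℂ) • Matrix.diagonal (fun z => (h (π.symm z) : ℂ))) (ψ π t)))
        (ψ (π * Equiv.swap z₀ w) t) with hfD
  set G : ℝ → ℝ := fun t => ∑ w ∈ Pr, ∑ π : Equiv.Perm (Fin N), (fIP π w t).re with hG
  set G' : ℝ → ℝ := fun t => ∑ w ∈ Pr, ∑ π : Equiv.Perm (Fin N), (fD π w t).re with hG'
  set Rq : ℝ := Real.sqrt (∑ z, h z ^ 2) with hRq
  set C : ℝ := 2 * (Nat.factorial N : ℝ) * Rq with hC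
  -- derivative of G
  have hGderiv : ∀ t ∈ Set.Icc (0:ℝ) T, HasDerivWithinAt G (G' t) (Set.Icc (0:ℝ) T) t := by
    intro t ht
    apply HasDerivWithinAt.fun_sum
    intro w _
    apply HasDerivWithinAt.fun_sum
    intro π _
    have hd : HasDerivWithinAt (fun s => fIP π w s) (fD π w t) (Set.Icc (0:ℝ) T) t :=
      ((hSch π t ht).inner (𝕜 := ℂ) (hSch (π * Equiv.swap z₀ w) t ht)).hasDerivWithinAt
    exact (Complex.reCLM.hasFDerivAt.comp_hasDerivWithinAt t hd)
  -- Cauchy-Schwarz helpers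
  have hsq1 : ∀ (x : EuclideanSpace ℂ (Fin N)), ‖x‖ = 1 → ∀ (π : Equiv.Perm (Fin N))
      (s : Finset (Fin N)), ∑ w ∈ s, ‖x (π w)‖ ^ 2 ≤ 1 := by
    intro x hx π s
    have h4 : ∑ z ∈ s.image π, ‖x z‖ ^ 2 = ∑ w ∈ s, ‖x (π w)‖ ^ 2 :=
      Finset.sum_image (fun a _ b _ hab => π.injective hab)
    rw [← h4]
    calc ∑ z ∈ s.image π, ‖x z‖ ^ 2 ≤ ∑ z, ‖x z‖ ^ 2 :=
        Finset.sum_le_sum_of_subset_of_nonneg (Finset.subset_univ _) (fun i _ _ => sq_nonneg _)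
      _ = 1 := by rw [stmt19.coords_norm_sq, hx, one_pow]
  have hCS : ∀ (x : EuclideanSpace ℂ (Fin N)), ‖x‖ = 1 → ∀ π : Equiv.Perm (Fin N),
      ∑ w ∈ Pr, h w * ‖x (π w)‖ ≤ Rq := by
    intro x hx π
    have h1 : (∑ w ∈ Pr, h w * ‖x (π w)‖) ^ 2
        ≤ (∑ w ∈ Pr, (h w) ^ 2) * (∑ w ∈ Pr, ‖x (π w)‖ ^ 2) :=
      Finset.sum_mul_sq_le_sq_mul_sq Pr _ _
    have h2 : ∑ w ∈ Pr, (h w) ^ 2 ≤ ∑ w, h w ^ 2 :=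
      Finset.sum_le_sum_of_subset_of_nonneg (Finset.subset_univ _) (fun i _ _ => sq_nonneg _)
    have h3 := hsq1 x hx π Pr
    have h5 : 0 ≤ ∑ w ∈ Pr, h w * ‖x (π w)‖ :=
      Finset.sum_nonneg fun w hw =>
        mul_nonneg (hpos w (Finset.ne_of_mem_erase hw)).le (norm_nonneg _)
    have h6 : (0:ℝ) ≤ ∑ w ∈ Pr, (h w)^2 := Finset.sum_nonneg fun w _ => sq_nonneg _
    have h65 : (0:ℝ) ≤ ∑ w ∈ Pr, ‖x (π w)‖ ^ 2 := Finset.sum_nonneg fun w _ => sq_nonneg _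
    have h7 : (∑ w ∈ Pr, h w * ‖x (π w)‖) ^ 2 ≤ ∑ z, h z ^ 2 := by nlinarith
    calc ∑ w ∈ Pr, h w * ‖x (π w)‖
        = Real.sqrt ((∑ w ∈ Pr, h w * ‖x (π w)‖) ^ 2) := (Real.sqrt_sq h5).symm
      _ ≤ Rq := Real.sqrt_le_sqrt h7
  -- bound on G'
  have hG'bound : ∀ t ∈ Set.Icc (0:ℝ) T, ‖G' t‖ ≤ C := by
    intro t ht
    have hb1 : ∀ w ∈ Pr, ∀ π : Equiv.Perm (Fin N),
        ‖fD π w t‖ ≤ h w * ‖ψ (π * Equiv.swap z₀ w) t ((π * Equiv.swap z₀ w) w)‖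
          + h w * ‖ψ π t (π w)‖ := by
      intro w hw π
      have hwz : w ≠ z₀ := Finset.ne_of_mem_erase hw
      have hz : (π * Equiv.swap z₀ w) w = π z₀ := by
        simp [Equiv.Perm.mul_apply, Equiv.swap_apply_right]
      rw [hz]
      exact stmt19.pair_bound h z₀ w h0 (hpos w hwz).le hwz (HD t) (hHDherm t) (c t) (hc t)
        π (ψ π t) (ψ (π * Equiv.swap z₀ w) t) (key_unit π t ht)
        (key_unit (π * Equiv.swap z₀ w) t ht)
    have hb2 : ∀ w : Fin N,
        (∑ π : Equiv.Perm (Fin N),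
            h w * ‖ψ (π * Equiv.swap z₀ w) t ((π * Equiv.swap z₀ w) w)‖)
        = ∑ π : Equiv.Perm (Fin N), h w * ‖ψ π t (π w)‖ := by
      intro w
      exact Equiv.sum_comp (Equiv.mulRight (Equiv.swap z₀ w))
        (fun π => h w * ‖ψ π t (π w)‖)
    have hb3 : |G' t| ≤ ∑ w ∈ Pr, ∑ π : Equiv.Perm (Fin N), ‖fD π w t‖ := by
      simp only [hG']
      calc |∑ w ∈ Pr, ∑ π : Equiv.Perm (Fin N), (fD π w t).re|
          ≤ ∑ w ∈ Pr, |∑ π : Equiv.Perm (Fin N), (fD π w t).re| :=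
            Finset.abs_sum_le_sum_abs _ _
        _ ≤ ∑ w ∈ Pr, ∑ π : Equiv.Perm (Fin N), |(fD π w t).re| :=
            Finset.sum_le_sum fun w _ => Finset.abs_sum_le_sum_abs _ _
        _ ≤ _ := Finset.sum_le_sum fun w _ => Finset.sum_le_sum fun π _ =>
            Complex.abs_re_le_norm _
    have hb4 : ∑ w ∈ Pr, ∑ π : Equiv.Perm (Fin N), ‖fD π w t‖
        ≤ 2 * ∑ π : Equiv.Perm (Fin N), ∑ w ∈ Pr, h w * ‖ψ π t (π w)‖ := by
      calc ∑ w ∈ Pr, ∑ π : Equiv.Perm (Fin N), ‖fD π w t‖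
          ≤ ∑ w ∈ Pr, ∑ π : Equiv.Perm (Fin N),
              (h w * ‖ψ (π * Equiv.swap z₀ w) t ((π * Equiv.swap z₀ w) w)‖
                + h w * ‖ψ π t (π w)‖) :=
            Finset.sum_le_sum fun w hw => Finset.sum_le_sum fun π _ => hb1 w hw π
        _ = ∑ w ∈ Pr, (2 * ∑ π : Equiv.Perm (Fin N), h w * ‖ψ π t (π w)‖) := by
            refine Finset.sum_congr rfl fun w _ => ?_
            rw [Finset.sum_add_distrib, hb2 w]; ring
        _ = 2 * ∑ π : Equiv.Perm (Fin N), ∑ w ∈ Pr, h w * ‖ψ π t (π w)‖ := by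
            rw [← Finset.mul_sum, Finset.sum_comm]
    have hb5 : ∑ π : Equiv.Perm (Fin N), ∑ w ∈ Pr, h w * ‖ψ π t (π w)‖
        ≤ (Nat.factorial N : ℝ) * Rq := by
      calc ∑ π : Equiv.Perm (Fin N), ∑ w ∈ Pr, h w * ‖ψ π t (π w)‖
          ≤ ∑ _π : Equiv.Perm (Fin N), Rq :=
            Finset.sum_le_sum fun π _ => hCS (ψ π t) (key_unit π t ht) π
        _ = (Fintype.card (Equiv.Perm (Fin N)) : ℝ) * Rq := by
            rw [Finset.sum_const, Finset.card_univ, nsmul_eq_mul]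
        _ = _ := by rw [Fintype.card_perm, Fintype.card_fin]
    rw [Real.norm_eq_abs]
    calc |G' t| ≤ ∑ w ∈ Pr, ∑ π : Equiv.Perm (Fin N), ‖fD π w t‖ := hb3
      _ ≤ 2 * ∑ π : Equiv.Perm (Fin N), ∑ w ∈ Pr, h w * ‖ψ π t (π w)‖ := hb4
      _ ≤ 2 * ((Nat.factorial N : ℝ) * Rq) := by linarith
      _ = C := by rw [hC]; ring
  have hMVT := norm_image_sub_le_of_norm_deriv_le_segment' hGderiv
      (fun x hx => hG'bound x (Set.Ico_subset_Icc_self hx)) T hTmem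
  -- value of G at 0
  have hPrcard : (Pr.card : ℝ) = (N:ℝ) - 1 := by
    rw [hPrdef, Finset.card_erase_of_mem (Finset.mem_univ _), Finset.card_univ, Fintype.card_fin,
      Nat.cast_sub (by omega : 1 ≤ N), Nat.cast_one]
  have hG0 : G 0 = ((N:ℝ) - 1) * (Nat.factorial N : ℝ) := by
    simp only [hG]
    have h1 : ∀ (w : Fin N) (π : Equiv.Perm (Fin N)), (fIP π w 0).re = 1 := by
      intro w π
      have e0 : fIP π w 0 = (inner ℂ ψ₀ ψ₀ : ℂ) := by
        simp only [hfIP]; rw [hstart, hstart]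
      have e1 := inner_self_eq_norm_sq (𝕜 := ℂ) ψ₀
      rw [hψ₀] at e1
      rw [e0]
      simpa using e1
    calc (∑ w ∈ Pr, ∑ π : Equiv.Perm (Fin N), (fIP π w 0).re)
        = ∑ _w ∈ Pr, ∑ _π : Equiv.Perm (Fin N), (1:ℝ) :=
          Finset.sum_congr rfl fun w _ => Finset.sum_congr rfl fun π _ => h1 w π
      _ = (Pr.card : ℝ) * (Fintype.card (Equiv.Perm (Fin N)) : ℝ) := by
          simp [Finset.sum_const, Finset.card_univ, mul_comm]
      _ = ((N:ℝ) - 1) * (Nat.factorial N : ℝ) := by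
          rw [hPrcard, Fintype.card_perm, Fintype.card_fin]
  -- the success set
  set S : Finset (Equiv.Perm (Fin N)) := Finset.univ.filter (fun π =>
      (1 / 2 : ℝ) ≤ ‖(inner ℂ (EuclideanSpace.single (π z₀) (1 : ℂ)) (ψ π T) : ℂ)‖ ^ 2) with hSdef
  have hScard : ε * (Nat.factorial N : ℝ) ≤ (S.card : ℝ) := hsuccess
  have hSamp : ∀ π ∈ S, (1/2:ℝ) ≤ ‖ψ π T (π z₀)‖ ^ 2 := by
    intro π hπ
    have h1 := (Finset.mem_filter.1 hπ).2
    rwa [EuclideanSpace.inner_single_left, map_one, one_mul] at h1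
  -- bad pairs
  set Q : Equiv.Perm (Fin N) → Fin N → Prop := fun σ w => (1/4:ℝ) < ‖ψ σ T (σ w)‖ with hQ
  have hKcard : ∀ σ : Equiv.Perm (Fin N), ((Pr.filter (fun w => Q σ w)).card : ℝ) ≤ 16 := by
    intro σ
    have h1 : ((Pr.filter (fun w => Q σ w)).card : ℝ) * (1/16)
        ≤ ∑ w ∈ Pr.filter (fun w => Q σ w), ‖ψ σ T (σ w)‖ ^ 2 := by
      have hterm : ∀ w ∈ Pr.filter (fun w => Q σ w), (1/16:ℝ) ≤ ‖ψ σ T (σ w)‖ ^ 2 := by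
        intro w hw
        have h2 := (Finset.mem_filter.1 hw).2
        simp only [hQ] at h2
        nlinarith [norm_nonneg (ψ σ T (σ w))]
      calc ((Pr.filter (fun w => Q σ w)).card : ℝ) * (1/16)
          = ∑ _w ∈ Pr.filter (fun w => Q σ w), (1/16:ℝ) := by
            rw [Finset.sum_const, nsmul_eq_mul]
        _ ≤ _ := Finset.sum_le_sum hterm
    have h3 : ∑ w ∈ Pr.filter (fun w => Q σ w), ‖ψ σ T (σ w)‖ ^ 2
        ≤ ∑ w ∈ Pr, ‖ψ σ T (σ w)‖ ^ 2 :=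
      Finset.sum_le_sum_of_subset_of_nonneg (Finset.filter_subset _ _) fun i _ _ => sq_nonneg _
    have h4 := hsq1 (ψ σ T) (key_unit σ T hTmem) σ Pr
    linarith
  set BadC : Fin N → ℝ := fun w =>
    (((Finset.univ.filter (fun π : Equiv.Perm (Fin N) => Q (π * Equiv.swap z₀ w) w)).card : ℝ))
    with hBadC
  have hBadcount : ∑ w ∈ Pr, BadC w ≤ 16 * (Nat.factorial N : ℝ) := by
    have h1 : ∀ w : Fin N, BadC w = ∑ σ' : Equiv.Perm (Fin N), (if Q σ' w then (1:ℝ) else 0) := by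
      intro w
      have e1 : ∑ π : Equiv.Perm (Fin N), (if Q (π * Equiv.swap z₀ w) w then (1:ℝ) else 0)
          = ∑ σ' : Equiv.Perm (Fin N), (if Q σ' w then (1:ℝ) else 0) :=
        Equiv.sum_comp (Equiv.mulRight (Equiv.swap z₀ w))
          (fun σ' => if Q σ' w then (1:ℝ) else 0)
      rw [hBadC, ← e1, Finset.sum_boole]
    have h2 : ∑ w ∈ Pr, ∑ σ' : Equiv.Perm (Fin N), (if Q σ' w then (1:ℝ) else 0)
        = ∑ σ' : Equiv.Perm (Fin N), ∑ w ∈ Pr, (if Q σ' w then (1:ℝ) else 0) :=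
      Finset.sum_comm
    have h3 : ∀ σ' : Equiv.Perm (Fin N),
        ∑ w ∈ Pr, (if Q σ' w then (1:ℝ) else 0) ≤ 16 := by
      intro σ'
      rw [Finset.sum_boole]
      exact hKcard σ'
    calc ∑ w ∈ Pr, BadC w
        = ∑ w ∈ Pr, ∑ σ' : Equiv.Perm (Fin N), (if Q σ' w then (1:ℝ) else 0) :=
          Finset.sum_congr rfl fun w _ => h1 w
      _ = ∑ σ' : Equiv.Perm (Fin N), ∑ w ∈ Pr, (if Q σ' w then (1:ℝ) else 0) := h2
      _ ≤ ∑ _σ' : Equiv.Perm (Fin N), (16:ℝ) := Finset.sum_le_sum fun σ' _ => h3 σ'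
      _ = (Fintype.card (Equiv.Perm (Fin N)) : ℝ) * 16 := by
          rw [Finset.sum_const, Finset.card_univ, nsmul_eq_mul]
      _ = 16 * (Nat.factorial N : ℝ) := by
          rw [Fintype.card_perm, Fintype.card_fin]; ring
  -- per-pair estimates at time T
  have hpair0 : ∀ (w : Fin N) (π : Equiv.Perm (Fin N)), (fIP π w T).re ≤ 1 := by
    intro w π
    have h1 : ‖fIP π w T‖ ≤ 1 := by
      calc ‖fIP π w T‖
          ≤ ‖ψ π T‖ * ‖ψ (π * Equiv.swap z₀ w) T‖ := norm_inner_le_norm _ _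
        _ = 1 := by rw [key_unit π T hTmem, key_unit _ T hTmem, one_mul]
    calc (fIP π w T).re ≤ |(fIP π w T).re| := le_abs_self _
      _ ≤ ‖fIP π w T‖ := Complex.abs_re_le_norm _
      _ ≤ 1 := h1
  have hpairGood : ∀ w ∈ Pr, ∀ π ∈ S, ¬ Q (π * Equiv.swap z₀ w) w →
      (fIP π w T).re ≤ 9/10 := by
    intro w hw π hπ hQn
    have hu : ‖ψ π T‖ = 1 := key_unit π T hTmem
    have hvn : ‖ψ (π * Equiv.swap z₀ w) T‖ = 1 := key_unit _ T hTmem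
    have ha : (1/2:ℝ) ≤ ‖ψ π T (π z₀)‖^2 := hSamp π hπ
    have hσw : (π * Equiv.swap z₀ w) w = π z₀ := by
      simp [Equiv.Perm.mul_apply, Equiv.swap_apply_right]
    have hb : ‖ψ (π * Equiv.swap z₀ w) T (π z₀)‖ ≤ 1/4 := by
      simp only [hQ] at hQn
      rw [hσw] at hQn
      linarith [not_lt.1 hQn]
    have hsubc : ‖ψ π T (π z₀) - ψ (π * Equiv.swap z₀ w) T (π z₀)‖
        ≤ ‖ψ π T - ψ (π * Equiv.swap z₀ w) T‖ := by
      have := stmt19.coord_norm_le (ψ π T - ψ (π * Equiv.swap z₀ w) T) (π z₀)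
      simpa using this
    have hsub : ‖ψ π T (π z₀)‖ - ‖ψ (π * Equiv.swap z₀ w) T (π z₀)‖
        ≤ ‖ψ π T - ψ (π * Equiv.swap z₀ w) T‖ := by
      have h2 := norm_sub_norm_le (ψ π T (π z₀)) (ψ (π * Equiv.swap z₀ w) T (π z₀))
      linarith
    have hns : ‖ψ π T - ψ (π * Equiv.swap z₀ w) T‖^2 = 2 - 2 * (fIP π w T).re := by
      have h1 := norm_sub_sq (𝕜 := ℂ) (ψ π T) (ψ (π * Equiv.swap z₀ w) T)
      rw [hu, hvn] at h1
      simp only [hfIP]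
      rw [h1]
      simp [RCLike.re_to_complex]
      ring
    have ha0 : 0 ≤ ‖ψ π T (π z₀)‖ := norm_nonneg _
    have hb0 : 0 ≤ ‖ψ (π * Equiv.swap z₀ w) T (π z₀)‖ := norm_nonneg _
    have hba : ‖ψ (π * Equiv.swap z₀ w) T (π z₀)‖ ≤ ‖ψ π T (π z₀)‖ := by nlinarith
    have h1 : (‖ψ π T (π z₀)‖ - ‖ψ (π * Equiv.swap z₀ w) T (π z₀)‖)^2
        ≤ ‖ψ π T - ψ (π * Equiv.swap z₀ w) T‖^2 :=
      pow_le_pow_left₀ (by linarith) hsub 2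
    have h2 : (1/5:ℝ) ≤ (‖ψ π T (π z₀)‖ - ‖ψ (π * Equiv.swap z₀ w) T (π z₀)‖)^2 := by
      nlinarith [sq_nonneg (6 * ‖ψ π T (π z₀)‖ - 17 * ‖ψ (π * Equiv.swap z₀ w) T (π z₀)‖)]
    nlinarith
  -- per-w lower bound
  have hloww : ∀ w ∈ Pr,
      (1/10) * ((S.card : ℝ) - BadC w)
      ≤ ∑ π : Equiv.Perm (Fin N), (1 - (fIP π w T).re) := by
    intro w hw
    set B := Finset.univ.filter (fun π : Equiv.Perm (Fin N) => Q (π * Equiv.swap z₀ w) w)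
      with hB
    have h1 : ∀ π ∈ S \ B, (1/10:ℝ) ≤ 1 - (fIP π w T).re := by
      intro π hπ
      have hπS : π ∈ S := (Finset.mem_sdiff.1 hπ).1
      have hπB : π ∉ B := (Finset.mem_sdiff.1 hπ).2
      have hnQ : ¬ Q (π * Equiv.swap z₀ w) w := by
        intro hq; exact hπB (Finset.mem_filter.2 ⟨Finset.mem_univ _, hq⟩)
      have := hpairGood w hw π hπS hnQ
      linarith
    have h2 : ∑ π ∈ S \ B, (1 - (fIP π w T).re)
        ≤ ∑ π : Equiv.Perm (Fin N), (1 - (fIP π w T).re) :=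
      Finset.sum_le_sum_of_subset_of_nonneg (Finset.subset_univ _)
        (fun π _ _ => by linarith [hpair0 w π])
    have h3 : ((S \ B).card : ℝ) * (1/10) ≤ ∑ π ∈ S \ B, (1 - (fIP π w T).re) := by
      calc ((S \ B).card : ℝ) * (1/10) = ∑ _π ∈ S \ B, (1/10:ℝ) := by
            rw [Finset.sum_const, nsmul_eq_mul]
        _ ≤ _ := Finset.sum_le_sum h1
    have h4 : (S.card : ℝ) - (B.card : ℝ) ≤ ((S \ B).card : ℝ) := by
      have h5 := Finset.card_le_card_sdiff_add_card (s := S) (t := B)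
      have h6 := (Nat.cast_le (α := ℝ)).2 h5
      push_cast at h6
      linarith
    have h7 : BadC w = (B.card : ℝ) := by rw [hBadC, hB]
    rw [h7]
    linarith
  -- total lower bound
  have hN1 : (0:ℝ) ≤ (N:ℝ) - 1 := by
    have : (2:ℝ) ≤ (N:ℝ) := by exact_mod_cast hN2
    linarith
  have hlowsum : (1/10) * (((N:ℝ)-1) * (ε * (Nat.factorial N : ℝ))
      - 16 * (Nat.factorial N : ℝ)) ≤ ((N:ℝ)-1) * (Nat.factorial N : ℝ) - G T := by
    have h1 : ∑ w ∈ Pr, ∑ π : Equiv.Perm (Fin N), (1 - (fIP π w T).re)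
        = ((N:ℝ)-1) * (Nat.factorial N : ℝ) - G T := by
      have e1 : ∀ w : Fin N, ∑ π : Equiv.Perm (Fin N), (1 - (fIP π w T).re)
          = (Nat.factorial N : ℝ) - ∑ π : Equiv.Perm (Fin N), (fIP π w T).re := by
        intro w
        rw [Finset.sum_sub_distrib, Finset.sum_const, Finset.card_univ, nsmul_eq_mul, mul_one,
          Fintype.card_perm, Fintype.card_fin]
      rw [Finset.sum_congr rfl (fun w _ => e1 w), Finset.sum_sub_distrib, Finset.sum_const,
        nsmul_eq_mul, hPrcard]
    have h2 : ∑ w ∈ Pr, (1/10) * ((S.card : ℝ) - BadC w)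
        ≤ ∑ w ∈ Pr, ∑ π : Equiv.Perm (Fin N), (1 - (fIP π w T).re) :=
      Finset.sum_le_sum fun w hw => hloww w hw
    have h3 : ∑ w ∈ Pr, (1/10) * ((S.card : ℝ) - BadC w)
        = (1/10) * (((N:ℝ)-1) * (S.card : ℝ) - ∑ w ∈ Pr, BadC w) := by
      rw [← Finset.mul_sum, Finset.sum_sub_distrib, Finset.sum_const, nsmul_eq_mul, hPrcard]
    have h4 : (((N:ℝ)-1) * (ε * (Nat.factorial N : ℝ))) ≤ ((N:ℝ)-1) * (S.card : ℝ) :=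
      mul_le_mul_of_nonneg_left hScard hN1
    rw [← h1]
    calc (1/10) * (((N:ℝ)-1) * (ε * (Nat.factorial N : ℝ)) - 16 * (Nat.factorial N : ℝ))
        ≤ (1/10) * (((N:ℝ)-1) * (S.card : ℝ) - ∑ w ∈ Pr, BadC w) := by
          have := hBadcount
          linarith
      _ = ∑ w ∈ Pr, (1/10) * ((S.card : ℝ) - BadC w) := h3.symm
      _ ≤ _ := h2
  -- combine with the mean value bound
  have hchain : (1/10) * (((N:ℝ)-1) * (ε * (Nat.factorial N : ℝ))
      - 16 * (Nat.factorial N : ℝ)) ≤ C * T := by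
    have h1 : G 0 - G T ≤ ‖G T - G 0‖ := by
      rw [Real.norm_eq_abs, abs_sub_comm]
      exact le_abs_self _
    have h2 := hMVT
    rw [sub_zero, hG0] at h2
    rw [hG0] at h1
    linarith
  have hfacpos : (0:ℝ) < (Nat.factorial N : ℝ) := by exact_mod_cast Nat.factorial_pos N
  have hmain : ε * ((N:ℝ)-1) - 16 ≤ 20 * Rq * T := by
    have h1 : ((1:ℝ)/10) * ((ε * ((N:ℝ)-1) - 16) * (Nat.factorial N : ℝ))
        ≤ (2 * Rq * T) * (Nat.factorial N : ℝ) := by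
      calc ((1:ℝ)/10) * ((ε * ((N:ℝ)-1) - 16) * (Nat.factorial N : ℝ))
          = (1/10) * (((N:ℝ)-1) * (ε * (Nat.factorial N : ℝ))
            - 16 * (Nat.factorial N : ℝ)) := by ring
        _ ≤ C * T := hchain
        _ = (2 * Rq * T) * (Nat.factorial N : ℝ) := by rw [hC]; ring
    have h2 : (ε * ((N:ℝ)-1) - 16) * (Nat.factorial N : ℝ)
        ≤ (20 * Rq * T) * (Nat.factorial N : ℝ) := by linarith
    exact le_of_mul_le_mul_right h2 hfacpos
  -- final numeric manipulation
  have hNR : (2:ℝ) ≤ (N:ℝ) := by exact_mod_cast hN2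
  have hεN : (256:ℝ) ≤ ε * (N:ℝ) := by
    rw [div_le_iff₀ hε0] at hNε
    linarith
  have hz1ne : (⟨1, by omega⟩ : Fin N) ≠ z₀ := by
    intro hcontra
    have := congrArg Fin.val hcontra
    simp [hz₀def] at this
  have hsumpos : 0 < ∑ z, h z ^ 2 := by
    apply Finset.sum_pos' (fun z _ => sq_nonneg _)
    exact ⟨⟨1, by omega⟩, Finset.mem_univ _, pow_pos (hpos _ hz1ne) 2⟩
  have hRqpos : 0 < Rq := Real.sqrt_pos.2 hsumpos
  have hn1pos : (0:ℝ) < (N:ℝ) - 1 := by linarith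
  have hsn1 : 0 < Real.sqrt ((N:ℝ)-1) := Real.sqrt_pos.2 hn1pos
  have hdenom : Real.sqrt ((∑ z, h z ^ 2) / ((N : ℝ) - 1)) = Rq / Real.sqrt ((N:ℝ)-1) :=
    Real.sqrt_div hsumpos.le _
  rw [hdenom]
  have hpos64 : 0 < 64 * (Rq / Real.sqrt ((N:ℝ)-1)) := by positivity
  rw [div_le_iff₀ hpos64]
  have hre : T * (64 * (Rq / Real.sqrt ((N:ℝ)-1))) = (64 * Rq * T) / Real.sqrt ((N:ℝ)-1) := by
    ring
  rw [hre, le_div_iff₀ hsn1]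
  have hsqN : Real.sqrt (N:ℝ) * Real.sqrt ((N:ℝ)-1) ≤ (N:ℝ) := by
    calc Real.sqrt (N:ℝ) * Real.sqrt ((N:ℝ)-1) ≤ Real.sqrt (N:ℝ) * Real.sqrt (N:ℝ) := by
          gcongr
          linarith
      _ = (N:ℝ) := Real.mul_self_sqrt (by linarith)
  have hε2 : ε^2 ≤ ε := by nlinarith
  have h20 : 20 * (ε^2 * (N:ℝ)) ≤ 64 * (ε * ((N:ℝ)-1) - 16) := by
    have hN0' : (0:ℝ) ≤ (N:ℝ) := by linarith
    nlinarith [mul_le_mul_of_nonneg_right hε2 hN0']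
  have hA : ε^2 * Real.sqrt (N:ℝ) * Real.sqrt ((N:ℝ)-1) ≤ ε^2 * (N:ℝ) := by
    have h1 := mul_le_mul_of_nonneg_left hsqN (sq_nonneg ε)
    nlinarith [h1]
  linarith
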